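/- The map α ↦ ρ^α from OX_n to the semigroup of normal cones T L(OX_n) is injective: if α, β ∈ OX_n and ρ^α = ρ^β as cones, then α = β. -/

import Mathlib

/-- The semigroup `OX_n` of order-preserving non-invertible transformations of
the chain `Fin n`, composed left to right. -/
def OX (n : ℕ) := {f : Fin n → Fin n // Monotone f ∧ ¬ Function.Surjective f}

instance (n : ℕ) : Mul (OX n) :=
  ⟨fun f g => ⟨g.1 ∘ f.1, g.2.1.comp f.2.1, fun h => g.2.2 h.of_comp⟩⟩

/-- The principal left ideal `S e`. -/
def Lideal {n : ℕ} (e : OX n) : Set (OX n) := {x | ∃ s, x = s * e}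

/-- The map `α ↦ ρ^α` into normal cones is injective: if the principal cones of
`α` and `β` have the same vertex and the same components (the component of
`ρ^α` at `S e` being `x ↦ x α`), then `α = β`. -/
theorem stmt12 (n : ℕ) (hn : 3 ≤ n) (α β : OX n)
    (hvtx : Set.range α.1 = Set.range β.1)
    (hcomp : ∀ e : OX n, e * e = e → ∀ x ∈ Lideal e, x * α = x * β) :
    α = β := by
  have hpos : 0 < n := by omega
  have h01 : (⟨0, by omega⟩ : Fin n) ≠ ⟨1, by omega⟩ := by
    simp [Fin.ext_iff]
  apply Subtype.ext
  funext x
  set e : OX n := ⟨fun _ => x, monotone_const, fun h => by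
    obtain ⟨a, ha⟩ := h ⟨0, by omega⟩
    obtain ⟨b, hb⟩ := h ⟨1, by omega⟩
    exact h01 (ha ▸ hb ▸ rfl)⟩ with he
  have hid : e * e = e := Subtype.ext rfl
  have := hcomp e hid e ⟨e, hid.symm⟩
  have := congrArg (fun f : OX n => f.1 ⟨0, hpos⟩) this
  exact this
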